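/- Let Λ_∞(α) be an infinite type power series space and K(b_{n,k}) a nuclear Köthe space. Let θ_0 ≠ 0. The upper triangular Toeplitz operator Ť_θ : Λ_∞(α) → K(b_{n,k}) is continuous if and only if θ ∈ (Λ_∞(α))′ (i.e. |θ_{n-1}| ≤ C₁ e^{m₁ α_n} for some m₁, C₁) and for every k ∈ ℕ there exist m ∈ ℕ and C > 0 with b_{n,k} ≤ C e^{m α_n} for all n ∈ ℕ. -/

import Mathlib

open scoped BigOperators
noncomputable section

/-- A Köthe matrix: non-negative entries, each row eventually positive,
rows non-decreasing in the second index. -/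
structure IsKotheMatrix (a : ℕ → ℕ → ℝ) : Prop where
  nonneg : ∀ n k, 0 ≤ a n k
  pos : ∀ n, ∃ k, 0 < a n k
  mono : ∀ n k, a n k ≤ a n (k + 1)

/-- Membership in the Köthe space `K(a)`. -/
def InKothe (a : ℕ → ℕ → ℝ) (x : ℕ → ℝ) : Prop :=
  ∀ k, Summable fun n => |x n| * a n k

/-- The `k`-th seminorm of the Köthe space `K(a)`. -/
def kNorm (a : ℕ → ℕ → ℝ) (k : ℕ) (x : ℕ → ℝ) : ℝ :=
  ∑' n, |x n| * a n k

/-- Grothendieck–Pietsch nuclearity criterion for a Köthe space. -/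
def IsNuclearKothe (a : ℕ → ℕ → ℝ) : Prop :=
  ∀ k, ∃ l, k < l ∧ Summable fun n => a n k / a n l

/-- The `n`-th unit vector. -/
def unitVec (n : ℕ) : ℕ → ℝ := fun j => if j = n then 1 else 0

/-- Weight of the finite type power series space `Λ₁(β)`. -/
def finW (β : ℕ → ℝ) (k : ℕ) (n : ℕ) : ℝ := Real.exp (-(β n) / (k : ℝ))

/-- Weight of the infinite type power series space `Λ_∞(β)`. -/
def infW (β : ℕ → ℝ) (k : ℕ) (n : ℕ) : ℝ := Real.exp ((k : ℝ) * β n)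

/-- The `k`-th seminorm of `Λ₁(β)` (for `0 < k`). -/
def finNorm (β : ℕ → ℝ) (k : ℕ) (x : ℕ → ℝ) : ℝ := ∑' n, |x n| * finW β k n

/-- The `k`-th seminorm of `Λ_∞(β)`. -/
def infNorm (β : ℕ → ℝ) (k : ℕ) (x : ℕ → ℝ) : ℝ := ∑' n, |x n| * infW β k n

/-- Membership in `Λ₁(β)`. -/
def memFin (β : ℕ → ℝ) (x : ℕ → ℝ) : Prop :=
  ∀ k : ℕ, 0 < k → Summable fun n => |x n| * finW β k n

/-- Membership in `Λ_∞(β)`. -/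
def memInf (β : ℕ → ℝ) (x : ℕ → ℝ) : Prop :=
  ∀ k : ℕ, 0 < k → Summable fun n => |x n| * infW β k n

/-- Lower triangular Toeplitz operator `T̂_θ`, `T̂_θ e_n = ∑_{j ≥ n} θ_{j-n} e_j`. -/
def hatT (θ : ℕ → ℝ) (x : ℕ → ℝ) : ℕ → ℝ :=
  fun j => ∑ i ∈ Finset.range (j + 1), θ (j - i) * x i

/-- Upper triangular Toeplitz operator `Ť_θ`, `Ť_θ e_n = ∑_{j ≤ n} θ_{n-j} e_j`. -/
def checkT (θ : ℕ → ℝ) (x : ℕ → ℝ) : ℕ → ℝ :=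
  fun j => ∑' i, θ i * x (j + i)

/-- Operator defined by a matrix acting on sequences. -/
def matOp (t : ℕ → ℕ → ℝ) (x : ℕ → ℝ) : ℕ → ℝ :=
  fun j => ∑' n, t j n * x n

/-- The growth condition (3.5): `β_s ≤ M (β_{s-t} + β_t)` for all `s > t`. -/
def GrowthCond (β : ℕ → ℝ) (M : ℕ) : Prop :=
  ∀ t s : ℕ, t < s → β s ≤ (M : ℝ) * (β (s - t) + β t)

lemma kothe_mono {b : ℕ → ℕ → ℝ} (hb : IsKotheMatrix b) (n : ℕ) : Monotone (b n) :=
  monotone_nat_of_le_succ (hb.mono n)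

lemma memInf_unitVec (α : ℕ → ℝ) (N : ℕ) : memInf α (unitVec N) := by
  intro k _
  apply summable_of_ne_finset_zero (s := {N})
  intro n hn
  simp only [Finset.mem_singleton] at hn
  simp [unitVec, hn]

lemma infNorm_unitVec (α : ℕ → ℝ) (m N : ℕ) : infNorm α m (unitVec N) = infW α m N := by
  unfold infNorm unitVec
  rw [tsum_eq_single N (fun n hn => by simp [hn])]
  simp

lemma checkT_unitVec (θ : ℕ → ℝ) (N j : ℕ) :
    checkT θ (unitVec N) j = if j ≤ N then θ (N - j) else 0 := by
  unfold checkT unitVec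
  split_ifs with h
  · rw [tsum_eq_single (N - j) (fun i hi => by rw [if_neg (by omega)]; ring)]
    rw [if_pos (by omega), mul_one]
  · have h0 : (fun i => θ i * (if j + i = N then (1:ℝ) else 0)) = fun _ => 0 :=
      funext fun i => by rw [if_neg (by omega)]; ring
    rw [h0, tsum_zero]


lemma key_bwd (α : ℕ → ℝ) (hα0 : ∀ n, 0 ≤ α n) (hαm : Monotone α)
    (b : ℕ → ℕ → ℝ) (hb : IsKotheMatrix b) (hnb : IsNuclearKothe b)
    (θ : ℕ → ℝ) (m₁ : ℕ) (C₁ : ℝ) (hC₁ : 0 < C₁) (hθb : ∀ n, |θ n| ≤ C₁ * infW α m₁ n)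
    (hbd : ∀ k, ∃ m, ∃ C > 0, ∀ n, b n k ≤ C * infW α m n) (k : ℕ) :
    ∃ m, ∃ C > 0, ∀ x, memInf α x →
      Summable (fun n => |checkT θ x n| * b n k) ∧
      kNorm b k (checkT θ x) ≤ C * infNorm α m x := by
  obtain ⟨l, hkl, hS⟩ := hnb k
  obtain ⟨ml, Cl, hCl, hbl⟩ := hbd l
  set S : ℝ := ∑' j, b j k / b j l with hSdef
  have hS0 : 0 ≤ S := tsum_nonneg fun j => div_nonneg (hb.nonneg j k) (hb.nonneg j l)
  set m : ℕ := m₁ + ml + 1 with hm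
  refine ⟨m, C₁ * Cl * (S + 1), by positivity, fun x hx => ?_⟩
  have hxm : Summable fun n => |x n| * infW α m n := hx m (by omega)
  have hN0 : 0 ≤ infNorm α m x :=
    tsum_nonneg fun n => mul_nonneg (abs_nonneg _) (Real.exp_pos _).le
  set N : ℝ := infNorm α m x with hNdef
  -- pointwise bound on the inner series
  have hpt : ∀ j i, |θ i * x (j + i)| ≤
      (C₁ * Real.exp (-((ml : ℝ) * α j))) * (|x (j + i)| * infW α m (j + i)) := by
    intro j i
    rw [abs_mul]
    have h1 : |θ i| ≤ C₁ * (Real.exp (-((ml : ℝ) * α j)) * infW α m (j + i)) := by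
      refine (hθb i).trans ?_
      rw [mul_le_mul_iff_right₀ hC₁]
      unfold infW
      rw [← Real.exp_add, Real.exp_le_exp]
      have h2 : α i ≤ α (j + i) := hαm (by omega)
      have h3 : α j ≤ α (j + i) := hαm (by omega)
      have h4 : 0 ≤ α (j + i) := hα0 _
      have h5 : 0 ≤ α i := hα0 _
      have h6 : 0 ≤ α j := hα0 _
      have hmm : (m : ℝ) = (m₁ : ℝ) + ml + 1 := by rw [hm]; push_cast; ring
      have e1 : (m₁ : ℝ) * α i ≤ (m₁ : ℝ) * α (j + i) :=
        mul_le_mul_of_nonneg_left h2 (Nat.cast_nonneg _)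
      have e2 : (ml : ℝ) * α j ≤ (ml : ℝ) * α (j + i) :=
        mul_le_mul_of_nonneg_left h3 (Nat.cast_nonneg _)
      rw [hmm]
      linarith
    calc |θ i| * |x (j + i)|
        ≤ (C₁ * (Real.exp (-((ml : ℝ) * α j)) * infW α m (j + i))) * |x (j + i)| :=
          mul_le_mul_of_nonneg_right h1 (abs_nonneg _)
      _ = (C₁ * Real.exp (-((ml : ℝ) * α j))) * (|x (j + i)| * infW α m (j + i)) := by ring
  have hshift : ∀ j : ℕ, Summable fun i => |x (j + i)| * infW α m (j + i) := by
    intro j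
    exact hxm.comp_injective (add_right_injective j)
  have habs : ∀ j : ℕ, Summable fun i => |θ i * x (j + i)| := by
    intro j
    exact Summable.of_nonneg_of_le (fun i => abs_nonneg _) (hpt j)
      ((hshift j).mul_left _)
  -- bound on checkT
  have hcb : ∀ j : ℕ, |checkT θ x j| ≤ (C₁ * Real.exp (-((ml : ℝ) * α j))) * N := by
    intro j
    have h1 : |checkT θ x j| ≤ ∑' i, |θ i * x (j + i)| := by
      have h0 := norm_tsum_le_tsum_norm (f := fun i => θ i * x (j + i))
        (by simpa only [Real.norm_eq_abs] using habs j)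
      simpa only [Real.norm_eq_abs, checkT] using h0
    refine h1.trans ?_
    have h2 : ∑' i, |θ i * x (j + i)| ≤
        ∑' i, (C₁ * Real.exp (-((ml : ℝ) * α j))) * (|x (j + i)| * infW α m (j + i)) :=
      Summable.tsum_le_tsum (hpt j) (habs j) ((hshift j).mul_left _)
    refine h2.trans ?_
    rw [tsum_mul_left]
    refine mul_le_mul_of_nonneg_left ?_ (by positivity)
    exact Summable.tsum_le_tsum_of_inj (fun i => j + i) (add_right_injective j)
      (fun c _ => mul_nonneg (abs_nonneg _) (Real.exp_pos _).le) (fun i => le_rfl)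
      (hshift j) hxm
  -- per-term outer bound
  have houter : ∀ j : ℕ, |checkT θ x j| * b j k ≤
      (C₁ * Cl * N) * (b j k / b j l) := by
    intro j
    have hkle : b j k ≤ b j l := kothe_mono hb j hkl.le
    by_cases hjl : b j l = 0
    · have : b j k = 0 := le_antisymm (hjl ▸ hkle) (hb.nonneg j k)
      simp [this, hjl]
    · have hjl' : 0 < b j l := lt_of_le_of_ne (hb.nonneg j l) (Ne.symm hjl)
      have hbk : b j k ≤ (b j k / b j l) * (Cl * Real.exp ((ml : ℝ) * α j)) := by
        calc b j k = (b j k / b j l) * b j l := (div_mul_cancel₀ _ hjl).symm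
          _ ≤ (b j k / b j l) * (Cl * Real.exp ((ml : ℝ) * α j)) :=
            mul_le_mul_of_nonneg_left (by simpa [infW] using hbl j)
              (div_nonneg (hb.nonneg j k) (hb.nonneg j l))
      calc |checkT θ x j| * b j k
          ≤ ((C₁ * Real.exp (-((ml : ℝ) * α j))) * N) *
            ((b j k / b j l) * (Cl * Real.exp ((ml : ℝ) * α j))) :=
            mul_le_mul (hcb j) hbk (hb.nonneg j k) (by positivity)
        _ = (C₁ * Cl * N) * (b j k / b j l) *
            (Real.exp (-((ml : ℝ) * α j)) * Real.exp ((ml : ℝ) * α j)) := by ring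
        _ = (C₁ * Cl * N) * (b j k / b j l) := by
            rw [← Real.exp_add, neg_add_cancel, Real.exp_zero, mul_one]
  have hOsum : Summable fun j => |checkT θ x j| * b j k :=
    Summable.of_nonneg_of_le (fun j => mul_nonneg (abs_nonneg _) (hb.nonneg j k))
      houter (hS.mul_left _)
  refine ⟨hOsum, ?_⟩
  have h1 : kNorm b k (checkT θ x) ≤ ∑' j, (C₁ * Cl * N) * (b j k / b j l) :=
    Summable.tsum_le_tsum houter hOsum (hS.mul_left _)
  rw [tsum_mul_left] at h1
  refine h1.trans ?_
  have : C₁ * Cl * N * S ≤ C₁ * Cl * (S + 1) * N := by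
    nlinarith [mul_nonneg (mul_nonneg hC₁.le hCl.le) hN0]
  linarith


/-- `Ť_θ : Λ_∞(α) → K(b)` (with `K(b)` nuclear) is continuous iff
`θ ∈ (Λ_∞(α))'` and for every `k` there are `m`, `C > 0` with
`b_{n,k} ≤ C e^{m α_n}` for all `n`. -/
theorem stmt12 (α : ℕ → ℝ) (hα0 : ∀ n, 0 ≤ α n) (hαm : Monotone α)
    (hαi : Filter.Tendsto α Filter.atTop Filter.atTop)
    (b : ℕ → ℕ → ℝ) (hb : IsKotheMatrix b) (hnb : IsNuclearKothe b)
    (θ : ℕ → ℝ) (hθ : θ 0 ≠ 0) :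
    ((∀ x, memInf α x → InKothe b (checkT θ x)) ∧
      ∀ k, ∃ m, ∃ C > 0, ∀ x, memInf α x →
        kNorm b k (checkT θ x) ≤ C * infNorm α m x)
    ↔ ((∃ m, ∃ C > 0, ∀ n, |θ n| ≤ C * infW α m n) ∧
       ∀ k, ∃ m, ∃ C > 0, ∀ n, b n k ≤ C * infW α m n) := by
  constructor
  · rintro ⟨hcont, hest⟩
    have hterm : ∀ (k n j : ℕ),
        |checkT θ (unitVec n) j| * b j k ≤ kNorm b k (checkT θ (unitVec n)) := by
      intro k n j
      exact Summable.le_tsum (hcont (unitVec n) (memInf_unitVec α n) k) j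
        (fun i _ => mul_nonneg (abs_nonneg _) (hb.nonneg i k))
    constructor
    · obtain ⟨k0, hk0⟩ := hb.pos 0
      obtain ⟨m, C, hC, hxE⟩ := hest k0
      refine ⟨m, C / b 0 k0, div_pos hC hk0, fun n => ?_⟩
      have h1 := (hterm k0 n 0).trans
        ((hxE (unitVec n) (memInf_unitVec α n)).trans_eq
          (by rw [infNorm_unitVec]))
      rw [checkT_unitVec] at h1
      simp only [Nat.zero_le, if_true, Nat.sub_zero] at h1
      rw [div_mul_eq_mul_div, le_div_iff₀ hk0]
      exact h1
    · intro k
      obtain ⟨m, C, hC, hxE⟩ := hest k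
      have hθ0 : 0 < |θ 0| := abs_pos.mpr hθ
      refine ⟨m, C / |θ 0|, div_pos hC hθ0, fun n => ?_⟩
      have h1 := (hterm k n n).trans
        ((hxE (unitVec n) (memInf_unitVec α n)).trans_eq
          (by rw [infNorm_unitVec]))
      rw [checkT_unitVec] at h1
      simp only [le_refl, if_true, Nat.sub_self] at h1
      rw [div_mul_eq_mul_div, le_div_iff₀ hθ0]
      calc b n k * |θ 0| = |θ 0| * b n k := by ring
        _ ≤ C * infW α m n := h1
  · rintro ⟨⟨m₁, C₁, hC₁, hθb⟩, hbd⟩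
    constructor
    · intro x hx k
      obtain ⟨m, C, hC, h⟩ := key_bwd α hα0 hαm b hb hnb θ m₁ C₁ hC₁ hθb hbd k
      exact (h x hx).1
    · intro k
      obtain ⟨m, C, hC, h⟩ := key_bwd α hα0 hαm b hb hnb θ m₁ C₁ hC₁ hθb hbd k
      exact ⟨m, C, hC, fun x hx => (h x hx).2⟩
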